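/- Assume additionally that |a_{11}| ≤ M almost surely for some constant M > 0. Then for every k ≥ 1 there is a constant C_k, depending only on k, such that Var(r_k^{(n)}) = E[|r_k^{(n)} − E[r_k^{(n)}]|²] ≤ 4·C_k·M^{2k}·n^{k−1} for all n ≥ 1. In particular Var(r_k^{(n)}/n^{k/2}) → 0 as n → ∞. -/

import Mathlib

open MeasureTheory ProbabilityTheory Filter

noncomputable section

/-- `r_k^{(n)}`: the sum of `a_{i₁i₂} a_{i₂i₃} ⋯ a_{i_k i₁}` over all `k`-tuples
`(i₁, …, i_k) ∈ {1,…,n}^k` whose set of entries has cardinality strictly less than `k`. -/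
def rsum {Ω : Type*} (a : ℕ → ℕ → Ω → ℂ) (k n : ℕ) (ω : Ω) : ℂ :=
  ∑ f ∈ Finset.univ.filter
      (fun f : Fin k → Fin n => (Finset.image f Finset.univ).card < k),
    ∏ l : Fin k, a (f l).1 (f (finRotate k l)).1 ω

open Finset

namespace RsumAux

variable {n : ℕ}

/-- Support vertices of a weight function. -/
def Vset (W : Fin n → Fin n → ℕ) : Finset (Fin n) :=
  Finset.univ.filter (fun u => ∃ x, 0 < W u x + W x u)

/-- Neighbours of `u`. -/
def nbrs (W : Fin n → Fin n → ℕ) (u : Fin n) : Finset (Fin n) :=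
  Finset.univ.filter (fun x => x ≠ u ∧ 0 < W u x + W x u)

lemma mem_Vset {W : Fin n → Fin n → ℕ} {u : Fin n} :
    u ∈ Vset W ↔ ∃ x, 0 < W u x + W x u := by simp [Vset]

lemma mem_nbrs {W : Fin n → Fin n → ℕ} {u x : Fin n} :
    x ∈ nbrs W u ↔ x ≠ u ∧ 0 < W u x + W x u := by simp [nbrs]

/-- Key balanced-weights lemma: if the weight function is balanced (in-degree equals
out-degree at every vertex), vanishes on the diagonal, and never takes the value 1, then
twice the number of support vertices is at most the total weight; in case of equality every
support vertex has a unique out-neighbour. -/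
lemma lemA : ∀ (S : ℕ) (W : Fin n → Fin n → ℕ),
    (∑ u, ∑ x, W u x) = S →
    (∀ u, ∑ x, W u x = ∑ x, W x u) →
    (∀ u, W u u = 0) →
    (∀ u x, W u x ≠ 1) →
    2 * (Vset W).card ≤ S ∧
      (2 * (Vset W).card = S → ∀ u ∈ Vset W, ∃! x, 0 < W u x) := by
  intro S
  induction S using Nat.strong_induction_on with
  | _ S ih =>
  intro W hS hbal hdiag h2
  -- neighbours are nonempty for support vertices
  have hnb_ne : ∀ u ∈ Vset W, (nbrs W u).Nonempty := by
    intro u hu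
    obtain ⟨x, hx⟩ := mem_Vset.1 hu
    refine ⟨x, mem_nbrs.2 ⟨?_, hx⟩⟩
    rintro rfl
    have h0 := hdiag x
    omega
  have hW2 : ∀ u x, x ∈ nbrs W u → 2 ≤ W u x + W x u := by
    intro u x hx
    obtain ⟨-, hpos⟩ := mem_nbrs.1 hx
    have := h2 u x; have := h2 x u; omega
  have hW0 : ∀ u x, x ∉ nbrs W u → W u x = 0 ∧ W x u = 0 := by
    intro u x hx
    rcases eq_or_ne x u with rfl | hne
    · constructor <;> exact hdiag _
    · rw [mem_nbrs] at hx
      push_neg at hx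
      have := hx hne; omega
  by_cases hleaf : ∃ u ∈ Vset W, (nbrs W u).card = 1
  · -- leaf case
    obtain ⟨u, huV, hcard⟩ := hleaf
    obtain ⟨y, hy⟩ := Finset.card_eq_one.1 hcard
    have hyn : y ∈ nbrs W u := by rw [hy]; exact mem_singleton_self y
    obtain ⟨hyu, hpos⟩ := mem_nbrs.1 hyn
    have honly : ∀ x, x ≠ y → W u x = 0 ∧ W x u = 0 := by
      intro x hx
      refine hW0 u x ?_
      rw [hy, mem_singleton]; exact hx
    have houtu : ∑ x, W u x = W u y := by
      refine Finset.sum_eq_single_of_mem y (mem_univ y) ?_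
      intro x _ hx; exact (honly x hx).1
    have hinu : ∑ x, W x u = W y u := by
      refine Finset.sum_eq_single_of_mem y (mem_univ y) ?_
      intro x _ hx; exact (honly x hx).2
    have heq_uy : W u y = W y u := by
      have := hbal u; rw [houtu, hinu] at this; exact this
    have hWuy2 : 2 ≤ W u y := by
      have := h2 u y; have := h2 y u; omega
    -- the reduced weight function
    set W' : Fin n → Fin n → ℕ :=
      fun a b => if (a = u ∧ b = y) ∨ (a = y ∧ b = u) then 0 else W a b with hW'def
    have hW'le : ∀ a b, W' a b ≤ W a b := by
      intro a b; rw [hW'def]; dsimp only; split <;> omega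
    have hW'u : ∀ x, W' u x = 0 := by
      intro x
      rcases eq_or_ne x y with rfl | hx
      · simp [hW'def]
      · rw [hW'def]; dsimp only
        split
        · rfl
        · rcases eq_or_ne x u with rfl | hxu
          · exact hdiag _
          · exact (honly x hx).1
    have hW'xu : ∀ x, W' x u = 0 := by
      intro x
      rcases eq_or_ne x y with rfl | hx
      · simp [hW'def]
      · rw [hW'def]; dsimp only
        split
        · rfl
        · rcases eq_or_ne x u with rfl | hxu
          · exact hdiag _
          · exact (honly x hx).2
    have hW'z : ∀ a, a ≠ u → a ≠ y → ∀ b, W' a b = W a b := by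
      intro a hau hay b; rw [hW'def]; dsimp only
      rw [if_neg]; rintro (⟨h1, -⟩ | ⟨h1, -⟩) <;> [exact hau h1; exact hay h1]
    have hW'zb : ∀ a, a ≠ u → a ≠ y → ∀ b, W' b a = W b a := by
      intro a hau hay b; rw [hW'def]; dsimp only
      rw [if_neg]; rintro (⟨-, h1⟩ | ⟨-, h1⟩) <;> [exact hay h1; exact hau h1]
    have hW'yb : ∀ b, b ≠ u → W' y b = W y b := by
      intro b hb; rw [hW'def]; dsimp only
      rw [if_neg]; rintro (⟨h1, -⟩ | ⟨-, h1⟩) <;> [exact hyu h1; exact hb h1]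
    have hW'by : ∀ b, b ≠ u → W' b y = W b y := by
      intro b hb; rw [hW'def]; dsimp only
      rw [if_neg]; rintro (⟨h1, -⟩ | ⟨-, h1⟩) <;> [exact hb h1; exact hyu h1]
    have hW'yu : W' y u = 0 := hW'xu y
    have h1 : ∑ x, W' y x = ∑ x ∈ Finset.univ.erase u, W y x := by
      rw [← Finset.add_sum_erase _ (fun x => W' y x) (mem_univ u), hW'xu y, zero_add]
      exact Finset.sum_congr rfl fun x hx => hW'yb x (Finset.ne_of_mem_erase hx)
    have h1' : ∑ x, W' x y = ∑ x ∈ Finset.univ.erase u, W x y := by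
      rw [← Finset.add_sum_erase _ (fun x => W' x y) (mem_univ u), hW'u y, zero_add]
      exact Finset.sum_congr rfl fun x hx => hW'by x (Finset.ne_of_mem_erase hx)
    have hry : ∑ x, W y x = W y u + ∑ x ∈ Finset.univ.erase u, W y x :=
      (Finset.add_sum_erase _ (fun x => W y x) (mem_univ u)).symm
    have hry' : ∑ x, W x y = W u y + ∑ x ∈ Finset.univ.erase u, W x y :=
      (Finset.add_sum_erase _ (fun x => W x y) (mem_univ u)).symm
    have hbal' : ∀ a, ∑ x, W' a x = ∑ x, W' x a := by
      intro a
      rcases eq_or_ne a u with rfl | hau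
      · rw [Finset.sum_eq_zero (fun x _ => hW'u x), Finset.sum_eq_zero (fun x _ => hW'xu x)]
      rcases eq_or_ne a y with rfl | hay
      · rw [h1, h1']
        have hb := hbal a
        rw [hry, hry'] at hb
        omega
      · calc ∑ x, W' a x = ∑ x, W a x := Finset.sum_congr rfl fun x _ => hW'z a hau hay x
          _ = ∑ x, W x a := hbal a
          _ = ∑ x, W' x a := (Finset.sum_congr rfl fun x _ => hW'zb a hau hay x).symm
    have hdiag' : ∀ a, W' a a = 0 := fun a => Nat.le_zero.1 (hdiag a ▸ hW'le a a)
    have h2' : ∀ a b, W' a b ≠ 1 := by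
      intro a b; rw [hW'def]; dsimp only; split
      · omega
      · exact h2 a b
    set S' : ℕ := ∑ u, ∑ x, W' u x with hS'def
    have hrow : ∀ a, ∑ x, W a x = ∑ x, W' a x + (if a = u then W u y else if a = y then W y u else 0) := by
      intro a
      rcases eq_or_ne a u with rfl | hau
      · rw [if_pos rfl, Finset.sum_eq_zero (fun x _ => hW'u x), zero_add, houtu]
      rcases eq_or_ne a y with rfl | hay
      · rw [if_neg hau, if_pos rfl, h1]
        omega
      · rw [if_neg hau, if_neg hay, add_zero]
        exact (Finset.sum_congr rfl fun x _ => (hW'z a hau hay x)).symm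
    have hsum_d : ∑ a, (if a = u then W u y else if a = y then W y u else 0) = W u y + W y u := by
      rw [← Finset.add_sum_erase _ _ (mem_univ u), if_pos rfl]
      congr 1
      rw [← Finset.add_sum_erase _ _ (Finset.mem_erase.2 ⟨hyu, mem_univ y⟩), if_neg hyu, if_pos rfl]
      rw [Finset.sum_eq_zero, add_zero]
      intro a ha
      obtain ⟨hay, ha'⟩ := Finset.mem_erase.1 ha
      obtain ⟨hau, -⟩ := Finset.mem_erase.1 ha'
      rw [if_neg hau, if_neg hay]
    have hSS' : S = S' + (W u y + W y u) := by
      calc S = ∑ a, ∑ x, W a x := hS.symm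
        _ = ∑ a, (∑ x, W' a x + (if a = u then W u y else if a = y then W y u else 0)) :=
            Finset.sum_congr rfl fun a _ => hrow a
        _ = S' + (W u y + W y u) := by rw [Finset.sum_add_distrib, hsum_d]
    have hS'lt : S' < S := by omega
    have IH := ih S' hS'lt W' hS'def.symm hbal' hdiag' h2'
    have IH1 := IH.1
    have hsubV : Vset W' ⊆ Vset W := by
      intro z hz
      obtain ⟨x, hx⟩ := mem_Vset.1 hz
      refine mem_Vset.2 ⟨x, ?_⟩
      have := hW'le z x; have := hW'le x z; omega
    have hunotV' : u ∉ Vset W' := by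
      intro hu
      obtain ⟨x, hx⟩ := mem_Vset.1 hu
      rw [hW'u x, hW'xu x] at hx; omega
    have hsub2 : Vset W ⊆ insert u (insert y (Vset W')) := by
      intro z hz
      rcases eq_or_ne z u with rfl | hzu
      · exact mem_insert_self _ _
      rcases eq_or_ne z y with rfl | hzy
      · exact mem_insert_of_mem (mem_insert_self _ _)
      · refine mem_insert_of_mem (mem_insert_of_mem ?_)
        obtain ⟨x, hx⟩ := mem_Vset.1 hz
        refine mem_Vset.2 ⟨x, ?_⟩
        rw [hW'z z hzu hzy x, hW'zb z hzu hzy x]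
        exact hx
    have hcard2 : (Vset W).card ≤ (Vset W').card + 2 := by
      have hc1 := Finset.card_le_card hsub2
      have hc2 := Finset.card_insert_le u (insert y (Vset W'))
      have hc3 := Finset.card_insert_le y (Vset W')
      omega
    refine ⟨by omega, ?_⟩
    intro hEq z hzV
    have hV'eq : 2 * (Vset W').card = S' := by omega
    have hWuy_eq : W u y = 2 := by omega
    have hcard_eq : (Vset W).card = (Vset W').card + 2 := by omega
    have hynotV' : y ∉ Vset W' := by
      intro hyV'
      have hsub3 : Vset W ⊆ insert u (Vset W') := by
        intro z' hz'
        have hmem := hsub2 hz'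
        rcases Finset.mem_insert.1 hmem with h | h
        · exact Finset.mem_insert.2 (Or.inl h)
        rcases Finset.mem_insert.1 h with h' | h'
        · exact mem_insert_of_mem (by rw [h']; exact hyV')
        · exact mem_insert_of_mem h'
      have hc1 := Finset.card_le_card hsub3
      have hc2 := Finset.card_insert_le u (Vset W')
      omega
    rcases eq_or_ne z u with rfl | hzu
    · refine ⟨y, by omega, ?_⟩
      intro x hx
      by_contra hxy
      have := (honly x hxy).1; omega
    rcases eq_or_ne z y with rfl | hzy
    · refine ⟨u, by omega, ?_⟩
      intro x hx
      by_contra hxu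
      have h0 := hW'yb x hxu
      have h0' := hW'by x hxu
      have h1 : ¬ (0 < W' z x + W' x z) := fun hp => hynotV' (mem_Vset.2 ⟨x, hp⟩)
      omega
    · have hzV' : z ∈ Vset W' := by
        obtain ⟨x, hx⟩ := mem_Vset.1 hzV
        refine mem_Vset.2 ⟨x, ?_⟩
        rw [hW'z z hzu hzy x, hW'zb z hzu hzy x]; exact hx
      obtain ⟨x, hx, huniq⟩ := IH.2 hV'eq z hzV'
      refine ⟨x, ?_, ?_⟩
      · show 0 < W z x
        rw [← hW'z z hzu hzy x]; exact hx
      · intro x' hx'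
        refine huniq x' ?_
        show 0 < W' z x'
        rw [hW'z z hzu hzy x']; exact hx'
  · push_neg at hleaf
    have hge2 : ∀ u ∈ Vset W, 2 ≤ (nbrs W u).card := by
      intro u hu
      have hp := (hnb_ne u hu).card_pos
      have h2c := hleaf u hu
      omega
    have hswap : ∑ u, ∑ x, W x u = S := by rw [Finset.sum_comm]; exact hS
    have h2S : ∑ u, ∑ x, (W u x + W x u) = 2 * S := by
      have hrw : ∀ u : Fin n, ∑ x, (W u x + W x u) = (∑ x, W u x) + (∑ x, W x u) :=
        fun u => Finset.sum_add_distrib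
      rw [Finset.sum_congr rfl (fun u _ => hrw u), Finset.sum_add_distrib, hS, hswap]
      ring
    have hsub1 : ∑ u ∈ Vset W, ∑ x ∈ nbrs W u, (W u x + W x u) ≤ 2 * S := by
      rw [← h2S]
      calc ∑ u ∈ Vset W, ∑ x ∈ nbrs W u, (W u x + W x u)
          ≤ ∑ u ∈ Vset W, ∑ x, (W u x + W x u) :=
            Finset.sum_le_sum fun u _ => Finset.sum_le_sum_of_subset (Finset.subset_univ _)
        _ ≤ ∑ u, ∑ x, (W u x + W x u) := Finset.sum_le_sum_of_subset (Finset.subset_univ _)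
    have hsub2 : ∀ u ∈ Vset W, 2 * (nbrs W u).card ≤ ∑ x ∈ nbrs W u, (W u x + W x u) := by
      intro u hu
      calc 2 * (nbrs W u).card = ∑ _x ∈ nbrs W u, 2 := by rw [Finset.sum_const, smul_eq_mul]; ring
        _ ≤ _ := Finset.sum_le_sum fun x hx => hW2 u x hx
    have hsub3 : 2 * (Vset W).card ≤ ∑ u ∈ Vset W, (nbrs W u).card := by
      calc 2 * (Vset W).card = ∑ _u ∈ Vset W, 2 := by rw [Finset.sum_const, smul_eq_mul]; ring
        _ ≤ _ := Finset.sum_le_sum hge2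
    have hchain : 2 * ∑ u ∈ Vset W, (nbrs W u).card ≤ ∑ u ∈ Vset W, ∑ x ∈ nbrs W u, (W u x + W x u) := by
      rw [Finset.mul_sum]
      exact Finset.sum_le_sum hsub2
    refine ⟨by omega, ?_⟩
    intro hEq
    have hA : ∑ u ∈ Vset W, (nbrs W u).card = 2 * (Vset W).card := by omega
    have hB : ∑ u ∈ Vset W, ∑ x ∈ nbrs W u, (W u x + W x u) = 2 * ∑ u ∈ Vset W, (nbrs W u).card := by omega
    have hconst : ∑ _u ∈ Vset W, 2 = 2 * (Vset W).card := by rw [Finset.sum_const, smul_eq_mul]; ring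
    have hcard_all : ∀ u ∈ Vset W, (nbrs W u).card = 2 := by
      intro u hu
      exact ((Finset.sum_eq_sum_iff_of_le hge2).1 (by rw [hconst]; omega) u hu).symm
    have hweq : ∀ u ∈ Vset W, ∀ x ∈ nbrs W u, W u x + W x u = 2 := by
      have houter : ∀ u ∈ Vset W, ∑ _x ∈ nbrs W u, 2 ≤ ∑ x ∈ nbrs W u, (W u x + W x u) :=
        fun u _ => Finset.sum_le_sum (fun x hx => hW2 u x hx)
      have hout_eq : ∀ u ∈ Vset W, ∑ _x ∈ nbrs W u, 2 = ∑ x ∈ nbrs W u, (W u x + W x u) := by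
        refine (Finset.sum_eq_sum_iff_of_le houter).1 ?_
        have hins : ∑ u ∈ Vset W, ∑ _x ∈ nbrs W u, (2:ℕ) = 2 * ∑ u ∈ Vset W, (nbrs W u).card := by
          rw [Finset.mul_sum]
          exact Finset.sum_congr rfl fun u _ => by rw [Finset.sum_const, smul_eq_mul]; ring
        omega
      intro u hu x hx
      exact ((Finset.sum_eq_sum_iff_of_le (fun x hx => hW2 u x hx)).1 (hout_eq u hu) x hx).symm
    intro u hu
    obtain ⟨y1, y2, hy12, hnn⟩ := Finset.card_eq_two.1 (hcard_all u hu)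
    have hy1 : y1 ∈ nbrs W u := by rw [hnn]; exact mem_insert_self _ _
    have hy2 : y2 ∈ nbrs W u := by rw [hnn]; exact mem_insert_of_mem (mem_singleton_self _)
    have hout : ∑ x, W u x = ∑ x ∈ nbrs W u, W u x := by
      refine (Finset.sum_subset (Finset.subset_univ _) ?_).symm
      intro x _ hx; exact (hW0 u x hx).1
    have hin : ∑ x, W x u = ∑ x ∈ nbrs W u, W x u := by
      refine (Finset.sum_subset (Finset.subset_univ _) ?_).symm
      intro x _ hx; exact (hW0 u x hx).2
    have hpair : ∑ x ∈ nbrs W u, W u x = W u y1 + W u y2 := by rw [hnn]; exact Finset.sum_pair hy12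
    have hpair' : ∑ x ∈ nbrs W u, W x u = W y1 u + W y2 u := by rw [hnn]; exact Finset.sum_pair hy12
    have hbu := hbal u
    rw [hout, hpair, hin, hpair'] at hbu
    have he1 := hweq u hu y1 hy1
    have he2 := hweq u hu y2 hy2
    have h21 := h2 u y1; have h22 := h2 u y2
    have h21' := h2 y1 u; have h22' := h2 y2 u
    have huniq0 : ∀ x, 0 < W u x → x = y1 ∨ x = y2 := by
      intro x hx
      have hxn : x ∈ nbrs W u := by
        by_contra hxn
        have := (hW0 u x hxn).1; omega
      rw [hnn, mem_insert, mem_singleton] at hxn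
      exact hxn
    have hcases : (W u y1 = 2 ∧ W u y2 = 0) ∨ (W u y1 = 0 ∧ W u y2 = 2) := by omega
    rcases hcases with ⟨ha, hb⟩ | ⟨ha, hb⟩
    · refine ⟨y1, by omega, fun x hx => ?_⟩
      rcases huniq0 x hx with rfl | rfl
      · rfl
      · omega
    · refine ⟨y2, by omega, fun x hx => ?_⟩
      rcases huniq0 x hx with rfl | rfl
      · omega
      · rfl


section Walks

variable {n k k' : ℕ}

/-- The `l`-th step of the closed walk determined by `f`. -/
def stp (f : Fin k → Fin n) (l : Fin k) : Fin n × Fin n := (f l, f (finRotate k l))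

/-- Number of occurrences of the edge `e` among the steps of `f`. -/
def cnt (f : Fin k → Fin n) (e : Fin n × Fin n) : ℕ :=
  (Finset.univ.filter (fun l => stp f l = e)).card

/-- Combined number of occurrences of the edge `e` among the steps of `f` and `g`. -/
def Ncnt (f g : Fin k → Fin n) (e : Fin n × Fin n) : ℕ := cnt f e + cnt g e

lemma cnt_pos {f : Fin k → Fin n} {e : Fin n × Fin n} : 0 < cnt f e ↔ ∃ l, stp f l = e := by
  simp [cnt, Finset.card_pos, Finset.filter_nonempty_iff]

lemma cnt_row (f : Fin k → Fin n) (u : Fin n) :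
    ∑ x, cnt f (u, x) = (Finset.univ.filter (fun l => f l = u)).card := by
  rw [Finset.card_eq_sum_card_fiberwise
    (s := Finset.univ.filter (fun l => f l = u)) (t := (Finset.univ : Finset (Fin n)))
    (f := fun l => f (finRotate k l)) (fun x _ => Finset.mem_univ _)]
  apply Finset.sum_congr rfl
  intro x _
  unfold cnt stp
  rw [Finset.filter_filter]
  congr 1
  apply Finset.filter_congr
  intro l _
  simp [Prod.ext_iff, and_comm]

lemma cnt_col (f : Fin k → Fin n) (u : Fin n) :
    ∑ x, cnt f (x, u) = (Finset.univ.filter (fun l => f l = u)).card := by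
  have h1 : ∑ x, cnt f (x, u) = (Finset.univ.filter (fun l => f (finRotate k l) = u)).card := by
    rw [Finset.card_eq_sum_card_fiberwise
      (s := Finset.univ.filter (fun l => f (finRotate k l) = u)) (t := (Finset.univ : Finset (Fin n)))
      (f := fun l => f l) (fun x _ => Finset.mem_univ _)]
    apply Finset.sum_congr rfl
    intro x _
    unfold cnt stp
    rw [Finset.filter_filter]
    congr 1
    apply Finset.filter_congr
    intro l _
    simp [Prod.ext_iff, and_comm]
  rw [h1]
  apply Finset.card_equiv (finRotate k)
  intro l
  simp

lemma cnt_tot (f : Fin k → Fin n) : ∑ u, ∑ x, cnt f (u, x) = k := by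
  rw [Finset.sum_congr rfl (fun u _ => cnt_row f u)]
  rw [← Finset.card_eq_sum_card_fiberwise (fun l (_ : l ∈ Finset.univ) => Finset.mem_univ (f l))]
  simp

lemma Ncnt_comm (f g : Fin k → Fin n) (e : Fin n × Fin n) : Ncnt f g e = Ncnt g f e :=
  add_comm _ _

lemma N_row_col (f g : Fin k → Fin n) (u : Fin n) :
    ∑ x, Ncnt f g (u, x) = ∑ x, Ncnt f g (x, u) := by
  unfold Ncnt
  rw [Finset.sum_add_distrib, Finset.sum_add_distrib, cnt_row, cnt_col, cnt_row, cnt_col]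

lemma N_tot (f g : Fin k → Fin n) : ∑ u, ∑ x, Ncnt f g (u, x) = 2 * k := by
  unfold Ncnt
  rw [Finset.sum_congr rfl fun u _ => Finset.sum_add_distrib, Finset.sum_add_distrib,
    cnt_tot, cnt_tot]
  ring

open Fin.NatCast in
/-- Iteration along the closed walk: a property that propagates along one step of the
walk and holds somewhere holds at every vertex of the walk. -/
lemma iter_mem (f : Fin (k'+1) → Fin n) (P : Fin n → Prop)
    (hstep : ∀ l, P (f l) → P (f (finRotate (k'+1) l)))
    (l0 : Fin (k'+1)) (h0 : P (f l0)) : ∀ l, P (f l) := by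
  have key : ∀ m : ℕ, P (f (l0 + (m : Fin (k'+1)))) := by
    intro m
    induction m with
    | zero => simpa using h0
    | succ m ihm =>
        have hre : (l0 + ((m+1 : ℕ) : Fin (k'+1))) = finRotate (k'+1) (l0 + (m : Fin (k'+1))) := by
          rw [finRotate_succ_apply]
          push_cast
          abel
        rw [hre]
        exact hstep _ ihm
  intro l
  have hl : l0 + (((l - l0).val : ℕ) : Fin (k'+1)) = l := by
    rw [Fin.cast_val_eq_self]
    exact (add_comm l0 (l - l0)).trans (sub_add_cancel l l0)
  rw [← hl]
  exact key _

end Walks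

section MainComb

open Finset

variable {n k' : ℕ}

/-- The non-loop weight function associated with a pair of walks. -/
def Wpair (f g : Fin (k'+1) → Fin n) (u x : Fin n) : ℕ :=
  if u = x then 0 else Ncnt f g (u, x)

lemma Wpair_comm (f g : Fin (k'+1) → Fin n) (u x : Fin n) :
    Wpair f g u x = Wpair g f u x := by
  unfold Wpair; rw [Ncnt_comm]

/-- Degenerate case: a vertex of the union which supports no non-loop edge. -/
lemma caseA (f g : Fin (k'+1) → Fin n)
    (hdg : (Finset.image g Finset.univ).card < k'+1)
    (hsh : ∃ l l', stp f l = stp g l')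
    (u : Fin n) (huf : u ∈ Finset.image f Finset.univ)
    (hu : ∀ x, ¬ (0 < Wpair f g u x + Wpair f g x u)) :
    ((Finset.image f Finset.univ) ∪ (Finset.image g Finset.univ)).card ≤ k' := by
  have hstep : ∀ l, f l = u → f (finRotate (k'+1) l) = u := by
    intro l hl
    by_contra hne
    have hx : 0 < cnt f (u, f (finRotate (k'+1) l)) := by
      rw [cnt_pos]
      exact ⟨l, by rw [stp, hl]⟩
    refine hu (f (finRotate (k'+1) l)) ?_
    have h1 : Wpair f g u (f (finRotate (k'+1) l)) = Ncnt f g (u, f (finRotate (k'+1) l)) := by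
      unfold Wpair
      rw [if_neg (fun h => hne h.symm)]
    unfold Ncnt at *
    omega
  obtain ⟨l0, -, hl0⟩ := Finset.mem_image.1 huf
  have hconst : ∀ l, f l = u := iter_mem f (fun z => z = u) hstep l0 hl0
  obtain ⟨l1, l1', hl1⟩ := hsh
  have hgu : g l1' = u := by
    have h1 : stp g l1' = (u, u) := by
      rw [← hl1, stp, hconst l1, hconst (finRotate (k'+1) l1)]
    rw [stp] at h1
    exact (Prod.ext_iff.1 h1).1
  have hsub : Finset.image f Finset.univ ⊆ Finset.image g Finset.univ := by
    intro z hz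
    obtain ⟨l, -, hl⟩ := Finset.mem_image.1 hz
    rw [← hl, hconst l, ← hgu]
    exact Finset.mem_image_of_mem g (Finset.mem_univ l1')
  rw [Finset.union_eq_right.2 hsub]
  omega

/-- Main combinatorial lemma: a "bad" pair of degenerate closed walks (sharing a step, and
with every edge appearing at least twice in total) visits at most `k-1` distinct vertices. -/
lemma main_comb (f g : Fin (k'+1) → Fin n)
    (hdf : (Finset.image f Finset.univ).card < k'+1)
    (hdg : (Finset.image g Finset.univ).card < k'+1)
    (hsh : ∃ l l', stp f l = stp g l')
    (h2 : ∀ e, Ncnt f g e ≠ 1) :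
    ((Finset.image f Finset.univ) ∪ (Finset.image g Finset.univ)).card ≤ k' := by
  classical
  set If := Finset.image f Finset.univ with hIf
  set Ig := Finset.image g Finset.univ with hIg
  set W : Fin n → Fin n → ℕ := Wpair f g with hW
  by_cases hcase : ∃ u ∈ If ∪ Ig, ∀ x, ¬ (0 < W u x + W x u)
  · obtain ⟨u, humem, hu⟩ := hcase
    rcases Finset.mem_union.1 humem with huf | hug
    · exact caseA f g hdg hsh u huf hu
    · have hsh' : ∃ l l', stp g l = stp f l' := by
        obtain ⟨l, l', h⟩ := hsh; exact ⟨l', l, h.symm⟩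
      have hu' : ∀ x, ¬ (0 < Wpair g f u x + Wpair g f x u) := by
        intro x
        rw [← Wpair_comm f g u x, ← Wpair_comm f g x u]
        exact hu x
      have := caseA g f hdf hsh' u hug hu'
      rwa [Finset.union_comm] at this
  · push_neg at hcase
    -- every vertex of the union is in the support of W
    have hsub1 : If ∪ Ig ⊆ Vset W := by
      intro z hz
      obtain ⟨x, hx⟩ := hcase z hz
      exact mem_Vset.2 ⟨x, hx⟩
    have hsub2 : Vset W ⊆ If ∪ Ig := by
      intro z hz
      obtain ⟨x, hx⟩ := mem_Vset.1 hz
      have hNpos : 0 < Ncnt f g (z, x) ∨ 0 < Ncnt f g (x, z) := by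
        rw [hW] at hx
        unfold Wpair at hx
        rcases eq_or_ne z x with rfl | hzx
        · simp at hx
        · rw [if_neg hzx, if_neg (Ne.symm hzx)] at hx
          omega
      have hmem : ∀ e : Fin n × Fin n, 0 < Ncnt f g e → e.1 = z ∨ e.2 = z → z ∈ If ∪ Ig := by
        intro e he hez
        unfold Ncnt at he
        have : 0 < cnt f e ∨ 0 < cnt g e := by omega
        rcases this with hcf | hcg
        · obtain ⟨l, hl⟩ := cnt_pos.1 hcf
          rw [stp] at hl
          apply Finset.mem_union_left
          rcases hez with h1 | h1
          · rw [← h1, ← hl]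
            exact Finset.mem_image_of_mem f (Finset.mem_univ l)
          · rw [← h1, ← hl]
            exact Finset.mem_image_of_mem f (Finset.mem_univ _)
        · obtain ⟨l, hl⟩ := cnt_pos.1 hcg
          rw [stp] at hl
          apply Finset.mem_union_right
          rcases hez with h1 | h1
          · rw [← h1, ← hl]
            exact Finset.mem_image_of_mem g (Finset.mem_univ l)
          · rw [← h1, ← hl]
            exact Finset.mem_image_of_mem g (Finset.mem_univ _)
      rcases hNpos with h | h
      · exact hmem (z, x) h (Or.inl rfl)
      · exact hmem (x, z) h (Or.inr rfl)
    have hVeq : If ∪ Ig = Vset W := Finset.Subset.antisymm hsub1 hsub2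
    -- hypotheses of lemA
    have hdiagW : ∀ u, W u u = 0 := fun u => if_pos rfl
    have h2W : ∀ u x, W u x ≠ 1 := by
      intro u x
      rw [hW]; unfold Wpair
      split
      · omega
      · exact h2 (u, x)
    have hrowW : ∀ u, ∑ x, W u x + Ncnt f g (u, u) = ∑ x, Ncnt f g (u, x) := by
      intro u
      rw [← Finset.add_sum_erase _ (fun x => Ncnt f g (u, x)) (mem_univ u),
          ← Finset.add_sum_erase _ (fun x => W u x) (mem_univ u), hdiagW u, zero_add]
      rw [add_comm]
      congr 1
      apply Finset.sum_congr rfl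
      intro x hx
      rw [hW]; unfold Wpair
      rw [if_neg (Ne.symm (Finset.ne_of_mem_erase hx))]
    have hcolW : ∀ u, ∑ x, W x u + Ncnt f g (u, u) = ∑ x, Ncnt f g (x, u) := by
      intro u
      rw [← Finset.add_sum_erase _ (fun x => Ncnt f g (x, u)) (mem_univ u),
          ← Finset.add_sum_erase _ (fun x => W x u) (mem_univ u), hdiagW u, zero_add]
      rw [add_comm]
      congr 1
      apply Finset.sum_congr rfl
      intro x hx
      rw [hW]; unfold Wpair
      rw [if_neg (Finset.ne_of_mem_erase hx)]
    have hbalW : ∀ u, ∑ x, W u x = ∑ x, W x u := by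
      intro u
      have h1 := hrowW u
      have h2' := hcolW u
      have h3 := N_row_col f g u
      omega
    have hStot : ∑ u, ∑ x, W u x + ∑ u, Ncnt f g (u, u) = 2 * (k'+1) := by
      rw [← N_tot f g, ← Finset.sum_add_distrib]
      exact Finset.sum_congr rfl fun u _ => hrowW u
    have hlem := lemA (∑ u, ∑ x, W u x) W rfl hbalW hdiagW h2W
    rw [hVeq]
    by_cases hL : 0 < ∑ u, Ncnt f g (u, u)
    · -- loops exist: at least 2 loop steps
      have hex : ∃ u, Ncnt f g (u, u) ≠ 0 := by
        by_contra hco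
        push_neg at hco
        rw [Finset.sum_eq_zero (fun u _ => hco u)] at hL
        omega
      obtain ⟨u0, hu0⟩ := hex
      have h2' : 2 ≤ Ncnt f g (u0, u0) := by have := h2 (u0, u0); omega
      have hle : Ncnt f g (u0, u0) ≤ ∑ u, Ncnt f g (u, u) :=
        Finset.single_le_sum (f := fun u => Ncnt f g (u, u)) (fun u _ => Nat.zero_le _) (mem_univ u0)
      have hlem1 := hlem.1
      omega
    · -- no loops at all
      have hL0 : ∑ u, Ncnt f g (u, u) = 0 := by omega
      have hnoloop : ∀ u, Ncnt f g (u, u) = 0 := by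
        intro u
        by_contra hne
        have hle : Ncnt f g (u, u) ≤ ∑ u, Ncnt f g (u, u) :=
          Finset.single_le_sum (f := fun u => Ncnt f g (u, u)) (fun u _ => Nat.zero_le _) (mem_univ u)
        omega
      have hnlf : ∀ l, f l ≠ f (finRotate (k'+1) l) := by
        intro l hl
        have : 0 < cnt f (f l, f l) := cnt_pos.2 ⟨l, by rw [stp, ← hl]⟩
        have := hnoloop (f l)
        unfold Ncnt at *
        omega
      have hnlg : ∀ l, g l ≠ g (finRotate (k'+1) l) := by
        intro l hl
        have : 0 < cnt g (g l, g l) := cnt_pos.2 ⟨l, by rw [stp, ← hl]⟩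
        have := hnoloop (g l)
        unfold Ncnt at *
        omega
      by_cases heq : 2 * (Vset W).card = ∑ u, ∑ x, W u x
      · -- equality case: unique out-neighbours
        have huniq := hlem.2 heq
        set σ : Fin n → Fin n := fun u => if h : ∃ x, 0 < W u x then h.choose else u with hσdef
        have hσ : ∀ u, u ∈ Vset W → ∀ x, 0 < W u x → σ u = x := by
          intro u hu x hx
          obtain ⟨x0, -, huni⟩ := huniq u hu
          have hex : ∃ x, 0 < W u x := ⟨x, hx⟩
          rw [hσdef]
          dsimp only
          rw [dif_pos hex]
          rw [huni _ hex.choose_spec, huni x hx]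
        have hWstepf : ∀ l, 0 < W (f l) (f (finRotate (k'+1) l)) := by
          intro l
          have h1 : 0 < cnt f (f l, f (finRotate (k'+1) l)) := cnt_pos.2 ⟨l, rfl⟩
          rw [hW]; unfold Wpair
          rw [if_neg (hnlf l)]
          unfold Ncnt
          omega
        have hWstepg : ∀ l, 0 < W (g l) (g (finRotate (k'+1) l)) := by
          intro l
          have h1 : 0 < cnt g (g l, g (finRotate (k'+1) l)) := cnt_pos.2 ⟨l, rfl⟩
          rw [hW]; unfold Wpair
          rw [if_neg (hnlg l)]
          unfold Ncnt
          omega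
        have hstepf : ∀ l, f (finRotate (k'+1) l) = σ (f l) := by
          intro l
          have hfV : f l ∈ Vset W :=
            hsub1 (Finset.mem_union_left _ (Finset.mem_image_of_mem f (Finset.mem_univ l)))
          exact (hσ (f l) hfV _ (hWstepf l)).symm
        have hstepg : ∀ l, g (finRotate (k'+1) l) = σ (g l) := by
          intro l
          have hgV : g l ∈ Vset W :=
            hsub1 (Finset.mem_union_right _ (Finset.mem_image_of_mem g (Finset.mem_univ l)))
          exact (hσ (g l) hgV _ (hWstepg l)).symm
        have hclosed : ∀ z ∈ If, σ z ∈ If := by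
          intro z hz
          obtain ⟨l, -, hl⟩ := Finset.mem_image.1 hz
          rw [← hl, ← hstepf l]
          exact Finset.mem_image_of_mem f (Finset.mem_univ _)
        obtain ⟨l1, l1', hl1⟩ := hsh
        have hseed : g l1' ∈ If := by
          have : g l1' = f l1 := ((Prod.ext_iff.1 hl1).1).symm
          rw [this]
          exact Finset.mem_image_of_mem f (Finset.mem_univ _)
        have hIgIf : ∀ l, g l ∈ If := by
          apply iter_mem g (fun z => z ∈ If) _ l1' hseed
          intro l hl
          rw [hstepg l]
          exact hclosed _ hl
        have hsubIg : Ig ⊆ If := by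
          intro z hz
          obtain ⟨l, -, hl⟩ := Finset.mem_image.1 hz
          rw [← hl]
          exact hIgIf l
        rw [← hVeq, Finset.union_eq_left.2 hsubIg]
        omega
      · have hlem1 := hlem.1
        omega

end MainComb

section Counting

open Finset

variable {n k' : ℕ}

/-- Counting pairs of functions whose union of images is small. -/
lemma count_small (hn : 1 ≤ n) :
    ((Finset.univ : Finset ((Fin (k'+1) → Fin n) × (Fin (k'+1) → Fin n))).filter
      (fun fg => ((Finset.image fg.1 Finset.univ) ∪ (Finset.image fg.2 Finset.univ)).card ≤ k')).card
      ≤ k' ^ (2 * (k'+1)) * n ^ k' := by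
  classical
  rcases Nat.eq_zero_or_pos k' with rfl | hk'
  · have hempty : ((Finset.univ : Finset ((Fin (0+1) → Fin n) × (Fin (0+1) → Fin n))).filter
        (fun fg => ((Finset.image fg.1 Finset.univ) ∪ (Finset.image fg.2 Finset.univ)).card ≤ 0)) = ∅ := by
      rw [Finset.filter_eq_empty_iff]
      intro fg _
      intro hcard
      rw [Nat.le_zero, Finset.card_eq_zero, Finset.union_eq_empty] at hcard
      have h0 : fg.1 0 ∈ Finset.image fg.1 Finset.univ :=
        Finset.mem_image_of_mem _ (Finset.mem_univ 0)
      rw [hcard.1] at h0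
      exact absurd h0 (Finset.notMem_empty _)
    rw [hempty]
    simp
  · set Φ : ((Fin (k'+1) → Fin k') × (Fin (k'+1) → Fin k') × (Fin k' → Fin n)) →
        ((Fin (k'+1) → Fin n) × (Fin (k'+1) → Fin n)) :=
      fun t => (t.2.2 ∘ t.1, t.2.2 ∘ t.2.1) with hΦ
    have hsub : ((Finset.univ : Finset ((Fin (k'+1) → Fin n) × (Fin (k'+1) → Fin n))).filter
        (fun fg => ((Finset.image fg.1 Finset.univ) ∪ (Finset.image fg.2 Finset.univ)).card ≤ k'))
        ⊆ Finset.image Φ Finset.univ := by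
      intro fg hfg
      obtain ⟨-, hcard⟩ := Finset.mem_filter.1 hfg
      set s := Finset.image fg.1 Finset.univ ∪ Finset.image fg.2 Finset.univ with hs
      have hmem1 : ∀ l, fg.1 l ∈ s :=
        fun l => Finset.mem_union_left _ (Finset.mem_image_of_mem _ (Finset.mem_univ l))
      have hmem2 : ∀ l, fg.2 l ∈ s :=
        fun l => Finset.mem_union_right _ (Finset.mem_image_of_mem _ (Finset.mem_univ l))
      set e := s.equivFin with he
      set σfun : Fin k' → Fin n :=
        fun i => if h2 : (i : ℕ) < s.card then ((e.symm ⟨(i:ℕ), h2⟩ : {x // x ∈ s}) : Fin n)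
          else ⟨0, hn⟩ with hσfun
      have hgen : ∀ (h : Fin (k'+1) → Fin n) (hm : ∀ l, h l ∈ s) (l : Fin (k'+1)),
          σfun (⟨(e ⟨h l, hm l⟩).1,
            lt_of_lt_of_le (e ⟨h l, hm l⟩).isLt hcard⟩ : Fin k') = h l := by
        intro h hm l
        rw [hσfun]
        dsimp only
        rw [dif_pos (e ⟨h l, hm l⟩).isLt]
        rw [Fin.eta, Equiv.symm_apply_apply]
      refine Finset.mem_image.2 ⟨⟨fun l => ⟨(e ⟨fg.1 l, hmem1 l⟩).1,
          lt_of_lt_of_le (e ⟨fg.1 l, hmem1 l⟩).isLt hcard⟩,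
        fun l => ⟨(e ⟨fg.2 l, hmem2 l⟩).1,
          lt_of_lt_of_le (e ⟨fg.2 l, hmem2 l⟩).isLt hcard⟩, σfun⟩, Finset.mem_univ _, ?_⟩
      rw [hΦ]
      dsimp only
      have h1 : (σfun ∘ fun l => (⟨(e ⟨fg.1 l, hmem1 l⟩).1,
          lt_of_lt_of_le (e ⟨fg.1 l, hmem1 l⟩).isLt hcard⟩ : Fin k')) = fg.1 :=
        funext fun l => hgen fg.1 hmem1 l
      have h2 : (σfun ∘ fun l => (⟨(e ⟨fg.2 l, hmem2 l⟩).1,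
          lt_of_lt_of_le (e ⟨fg.2 l, hmem2 l⟩).isLt hcard⟩ : Fin k')) = fg.2 :=
        funext fun l => hgen fg.2 hmem2 l
      rw [h1, h2]
    calc ((Finset.univ : Finset ((Fin (k'+1) → Fin n) × (Fin (k'+1) → Fin n))).filter
        (fun fg => ((Finset.image fg.1 Finset.univ) ∪ (Finset.image fg.2 Finset.univ)).card ≤ k')).card
        ≤ (Finset.image Φ Finset.univ).card := Finset.card_le_card hsub
      _ ≤ (Finset.univ : Finset ((Fin (k'+1) → Fin k') × (Fin (k'+1) → Fin k') × (Fin k' → Fin n))).card :=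
          Finset.card_image_le
      _ = k' ^ (k'+1) * (k' ^ (k'+1) * n ^ k') := by
          rw [Finset.card_univ]
          simp [Fintype.card_fun]
      _ ≤ k' ^ (2 * (k'+1)) * n ^ k' := by
          rw [two_mul, pow_add]
          exact le_of_eq (by ring)

end Counting

section Prob

open MeasureTheory ProbabilityTheory

variable {Ω : Type*} [MeasurableSpace Ω] {P : Measure Ω} [IsProbabilityMeasure P]

lemma integral_complex_re (f : Ω → ℂ) (hf : Integrable f P) :
    ∫ ω, (f ω).re ∂P = (∫ ω, f ω ∂P).re := by
  have h := integral_re (μ := P) hf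
  simpa [RCLike.re_to_complex] using h

lemma integral_complex_im (f : Ω → ℂ) (hf : Integrable f P) :
    ∫ ω, (f ω).im ∂P = (∫ ω, f ω ∂P).im := by
  have h := integral_im (μ := P) hf
  simpa [RCLike.im_to_complex] using h

/-- Complex version of `IndepFun.integral_mul`. -/
lemma indep_integral_mul {U V : Ω → ℂ} (h : ProbabilityTheory.IndepFun U V P)
    (hU : Integrable U P) (hV : Integrable V P)
    (hUV : Integrable (fun ω => U ω * V ω) P) :
    ∫ ω, U ω * V ω ∂P = (∫ ω, U ω ∂P) * (∫ ω, V ω ∂P) := by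
  have hUre : Integrable (fun ω => (U ω).re) P := by
    simpa [RCLike.re_to_complex] using hU.re
  have hUim : Integrable (fun ω => (U ω).im) P := by
    simpa [RCLike.im_to_complex] using hU.im
  have hVre : Integrable (fun ω => (V ω).re) P := by
    simpa [RCLike.re_to_complex] using hV.re
  have hVim : Integrable (fun ω => (V ω).im) P := by
    simpa [RCLike.im_to_complex] using hV.im
  have mre : Measurable (Complex.re) := Complex.measurable_re
  have mim : Measurable (Complex.im) := Complex.measurable_im
  have i_rr : Integrable (fun ω => (U ω).re * (V ω).re) P :=
    (h.comp mre mre).integrable_mul hUre hVre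
  have i_ii : Integrable (fun ω => (U ω).im * (V ω).im) P :=
    (h.comp mim mim).integrable_mul hUim hVim
  have i_ri : Integrable (fun ω => (U ω).re * (V ω).im) P :=
    (h.comp mre mim).integrable_mul hUre hVim
  have i_ir : Integrable (fun ω => (U ω).im * (V ω).re) P :=
    (h.comp mim mre).integrable_mul hUim hVre
  have e_rr : ∫ ω, (U ω).re * (V ω).re ∂P = (∫ ω, (U ω).re ∂P) * (∫ ω, (V ω).re ∂P) :=
    (h.comp mre mre).integral_fun_mul_eq_mul_integral hUre.1 hVre.1
  have e_ii : ∫ ω, (U ω).im * (V ω).im ∂P = (∫ ω, (U ω).im ∂P) * (∫ ω, (V ω).im ∂P) :=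
    (h.comp mim mim).integral_fun_mul_eq_mul_integral hUim.1 hVim.1
  have e_ri : ∫ ω, (U ω).re * (V ω).im ∂P = (∫ ω, (U ω).re ∂P) * (∫ ω, (V ω).im ∂P) :=
    (h.comp mre mim).integral_fun_mul_eq_mul_integral hUre.1 hVim.1
  have e_ir : ∫ ω, (U ω).im * (V ω).re ∂P = (∫ ω, (U ω).im ∂P) * (∫ ω, (V ω).re ∂P) :=
    (h.comp mim mre).integral_fun_mul_eq_mul_integral hUim.1 hVre.1
  have hre : (∫ ω, (U ω * V ω).re ∂P) =
      (∫ ω, (U ω).re ∂P) * (∫ ω, (V ω).re ∂P) - (∫ ω, (U ω).im ∂P) * (∫ ω, (V ω).im ∂P) := by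
    simp only [Complex.mul_re]
    rw [integral_sub i_rr i_ii, e_rr, e_ii]
  have him : (∫ ω, (U ω * V ω).im ∂P) =
      (∫ ω, (U ω).re ∂P) * (∫ ω, (V ω).im ∂P) + (∫ ω, (U ω).im ∂P) * (∫ ω, (V ω).re ∂P) := by
    simp only [Complex.mul_im]
    rw [integral_add i_ri i_ir, e_ri, e_ir]
  apply Complex.ext
  · rw [Complex.mul_re, ← integral_complex_re _ hUV, hre,
      integral_complex_re _ hU, integral_complex_re _ hV,
      integral_complex_im _ hU, integral_complex_im _ hV]
  · rw [Complex.mul_im, ← integral_complex_im _ hUV, him,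
      integral_complex_re _ hU, integral_complex_re _ hV,
      integral_complex_im _ hU, integral_complex_im _ hV]

variable {a : ℕ → ℕ → Ω → ℂ}

/-- Products of entries over disjoint sets of indices are independent
(general composition form). -/
lemma indep_comp_sets (hmeas : ∀ i j, Measurable (a i j))
    (hindep : iIndepFun (fun p : ℕ × ℕ => a p.1 p.2) P)
    (S T : Finset (ℕ × ℕ)) (hST : Disjoint S T)
    (φ : ((p : {x // x ∈ S}) → ℂ) → ℂ) (ψ : ((p : {x // x ∈ T}) → ℂ) → ℂ)
    (hφ : Measurable φ) (hψ : Measurable ψ) :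
    ProbabilityTheory.IndepFun (fun ω => φ (fun p => a (p : ℕ × ℕ).1 (p : ℕ × ℕ).2 ω))
      (fun ω => ψ (fun p => a (p : ℕ × ℕ).1 (p : ℕ × ℕ).2 ω)) P := by
  have base := hindep.indepFun_finset S T hST (fun p => hmeas p.1 p.2)
  exact base.comp hφ hψ

/-- A single entry is independent of a product (with conjugates) of entries at
other indices. -/
lemma indep_single_prod (hmeas : ∀ i j, Measurable (a i j))
    (hindep : iIndepFun (fun p : ℕ × ℕ => a p.1 p.2) P)
    (q : ℕ × ℕ) {m1 m2 : ℕ} (s1 : Finset (Fin m1)) (s2 : Finset (Fin m2))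
    (p1 : Fin m1 → ℕ × ℕ) (p2 : Fin m2 → ℕ × ℕ)
    (h1 : ∀ l ∈ s1, p1 l ≠ q) (h2 : ∀ l ∈ s2, p2 l ≠ q) :
    ProbabilityTheory.IndepFun (a q.1 q.2)
      (fun ω => (∏ l ∈ s1, a (p1 l).1 (p1 l).2 ω) *
        ∏ l ∈ s2, (starRingEnd ℂ) (a (p2 l).1 (p2 l).2 ω)) P := by
  classical
  set T : Finset (ℕ × ℕ) := s1.image p1 ∪ s2.image p2 with hT
  have hqT : q ∉ T := by
    rw [hT]
    intro hq
    rcases Finset.mem_union.1 hq with hq1 | hq1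
    · obtain ⟨l, hl, hlq⟩ := Finset.mem_image.1 hq1
      exact h1 l hl hlq
    · obtain ⟨l, hl, hlq⟩ := Finset.mem_image.1 hq1
      exact h2 l hl hlq
  have hdisj : Disjoint ({q} : Finset (ℕ × ℕ)) T := by
    rw [Finset.disjoint_singleton_left]; exact hqT
  have hm1T : ∀ l ∈ s1, p1 l ∈ T := fun l hl => Finset.mem_union_left _ (Finset.mem_image_of_mem _ hl)
  have hm2T : ∀ l ∈ s2, p2 l ∈ T := fun l hl => Finset.mem_union_right _ (Finset.mem_image_of_mem _ hl)
  have key := indep_comp_sets hmeas hindep {q} T hdisj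
    (φ := fun v => v ⟨q, Finset.mem_singleton_self q⟩)
    (ψ := fun v => (∏ l ∈ s1, (if h : p1 l ∈ T then v ⟨p1 l, h⟩ else 0)) *
      ∏ l ∈ s2, (starRingEnd ℂ) (if h : p2 l ∈ T then v ⟨p2 l, h⟩ else 0))
    (measurable_pi_apply _)
    (by
      apply Measurable.mul
      · apply Finset.measurable_prod
        intro l _
        by_cases h : p1 l ∈ T
        · simp only [dif_pos h]; exact measurable_pi_apply _
        · simp only [dif_neg h]; exact measurable_const
      · apply Finset.measurable_prod
        intro l _
        have hd : Measurable (fun v : (p : {x // x ∈ T}) → ℂ =>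
            (if h : p2 l ∈ T then v ⟨p2 l, h⟩ else 0)) := by
          by_cases h : p2 l ∈ T
          · simp only [dif_pos h]; exact measurable_pi_apply _
          · simp only [dif_neg h]; exact measurable_const
        exact (continuous_star.measurable.comp hd))
  have heq1 : (fun ω => (fun v : (p : {x // x ∈ ({q} : Finset (ℕ × ℕ))}) → ℂ =>
      v ⟨q, Finset.mem_singleton_self q⟩) (fun p => a (p : ℕ × ℕ).1 (p : ℕ × ℕ).2 ω)) = a q.1 q.2 := rfl
  have heq2 : (fun ω => (∏ l ∈ s1, (if h : p1 l ∈ T then a (p1 l).1 (p1 l).2 ω else 0)) *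
      ∏ l ∈ s2, (starRingEnd ℂ) (if h : p2 l ∈ T then a (p2 l).1 (p2 l).2 ω else 0)) =
      (fun ω => (∏ l ∈ s1, a (p1 l).1 (p1 l).2 ω) *
        ∏ l ∈ s2, (starRingEnd ℂ) (a (p2 l).1 (p2 l).2 ω)) := by
    funext ω
    congr 1
    · exact Finset.prod_congr rfl fun l hl => by rw [dif_pos (hm1T l hl)]
    · exact Finset.prod_congr rfl fun l hl => by rw [dif_pos (hm2T l hl)]
  rw [heq1, heq2] at key
  exact key

/-- A product of entries is independent of a conjugated product of entries over a
disjoint index set. -/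
lemma indep_prod_conj_prod (hmeas : ∀ i j, Measurable (a i j))
    (hindep : iIndepFun (fun p : ℕ × ℕ => a p.1 p.2) P)
    {m1 m2 : ℕ} (s1 : Finset (Fin m1)) (s2 : Finset (Fin m2))
    (p1 : Fin m1 → ℕ × ℕ) (p2 : Fin m2 → ℕ × ℕ)
    (hd : ∀ l ∈ s1, ∀ l2 ∈ s2, p1 l ≠ p2 l2) :
    ProbabilityTheory.IndepFun (fun ω => ∏ l ∈ s1, a (p1 l).1 (p1 l).2 ω)
      (fun ω => ∏ l ∈ s2, (starRingEnd ℂ) (a (p2 l).1 (p2 l).2 ω)) P := by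
  classical
  set S : Finset (ℕ × ℕ) := s1.image p1 with hS
  set T : Finset (ℕ × ℕ) := s2.image p2 with hT
  have hdisj : Disjoint S T := by
    rw [Finset.disjoint_left]
    intro e heS heT
    obtain ⟨l, hl, rfl⟩ := Finset.mem_image.1 heS
    obtain ⟨l2, hl2, hleq⟩ := Finset.mem_image.1 heT
    exact hd l hl l2 hl2 hleq.symm
  have hm1 : ∀ l ∈ s1, p1 l ∈ S := fun l hl => Finset.mem_image_of_mem _ hl
  have hm2 : ∀ l ∈ s2, p2 l ∈ T := fun l hl => Finset.mem_image_of_mem _ hl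
  have key := indep_comp_sets hmeas hindep S T hdisj
    (φ := fun v => ∏ l ∈ s1, (if h : p1 l ∈ S then v ⟨p1 l, h⟩ else 0))
    (ψ := fun v => ∏ l ∈ s2, (starRingEnd ℂ) (if h : p2 l ∈ T then v ⟨p2 l, h⟩ else 0))
    (by
      apply Finset.measurable_prod
      intro l _
      by_cases h : p1 l ∈ S
      · simp only [dif_pos h]; exact measurable_pi_apply _
      · simp only [dif_neg h]; exact measurable_const)
    (by
      apply Finset.measurable_prod
      intro l _
      have hd : Measurable (fun v : (p : {x // x ∈ T}) → ℂ =>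
          (if h : p2 l ∈ T then v ⟨p2 l, h⟩ else 0)) := by
        by_cases h : p2 l ∈ T
        · simp only [dif_pos h]; exact measurable_pi_apply _
        · simp only [dif_neg h]; exact measurable_const
      exact (continuous_star.measurable.comp hd))
  have heq1 : (fun ω => ∏ l ∈ s1, (if h : p1 l ∈ S then a (p1 l).1 (p1 l).2 ω else 0)) =
      (fun ω => ∏ l ∈ s1, a (p1 l).1 (p1 l).2 ω) := by
    funext ω
    exact Finset.prod_congr rfl fun l hl => by rw [dif_pos (hm1 l hl)]
  have heq2 : (fun ω => ∏ l ∈ s2, (starRingEnd ℂ) (if h : p2 l ∈ T then a (p2 l).1 (p2 l).2 ω else 0)) =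
      (fun ω => ∏ l ∈ s2, (starRingEnd ℂ) (a (p2 l).1 (p2 l).2 ω)) := by
    funext ω
    exact Finset.prod_congr rfl fun l hl => by rw [dif_pos (hm2 l hl)]
  rw [heq1, heq2] at key
  exact key

end Prob

section VarBound

open MeasureTheory ProbabilityTheory

variable {Ω : Type*} [MeasurableSpace Ω] {P : Measure Ω} [IsProbabilityMeasure P]
variable {a : ℕ → ℕ → Ω → ℂ} {M : ℝ}

set_option maxHeartbeats 2000000 in
/-- The central estimate: the variance of `r_k^{(n)}` is bounded by the number of "bad"
pairs of degenerate walks times `2 M^{2k}`. -/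
lemma var_bound
    (hmeas : ∀ i j, Measurable (a i j))
    (hindep : iIndepFun (fun p : ℕ × ℕ => a p.1 p.2) P)
    (hident : ∀ i j, IdentDistrib (a i j) (a 0 0) P P)
    (hmean : ∫ ω, a 0 0 ω ∂P = 0)
    (hM : 0 < M) (hbound : ∀ᵐ ω ∂P, ‖a 0 0 ω‖ ≤ M)
    (k' n : ℕ) (hn : 1 ≤ n) :
    ∫ ω, ‖rsum a (k'+1) n ω - ∫ ω', rsum a (k'+1) n ω' ∂P‖ ^ 2 ∂P
      ≤ ((k' ^ (2 * (k'+1)) * n ^ k' : ℕ) : ℝ) * (2 * (M ^ (k'+1) * M ^ (k'+1))) := by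

  classical
  have hMnn : 0 ≤ M := le_of_lt hM
  -- a.e. bounds for all entries
  have habd : ∀ i j, ∀ᵐ ω ∂P, ‖a i j ω‖ ≤ M := by
    intro i j
    have hs : MeasurableSet {z : ℂ | M < ‖z‖} := measurableSet_lt measurable_const measurable_norm
    rw [ae_iff] at hbound ⊢
    have h1 : {ω | ¬ ‖a i j ω‖ ≤ M} = (a i j) ⁻¹' {z : ℂ | M < ‖z‖} := by
      ext ω; simp [not_le]
    have h2 : {ω | ¬ ‖a 0 0 ω‖ ≤ M} = (a 0 0) ⁻¹' {z : ℂ | M < ‖z‖} := by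
      ext ω; simp [not_le]
    rw [h1, ← Measure.map_apply (hmeas i j) hs, (hident i j).map_eq,
      Measure.map_apply (hmeas 0 0) hs, ← h2]
    exact hbound
  have hmean0 : ∀ i j, ∫ ω, a i j ω ∂P = 0 := fun i j => ((hident i j).integral_eq).trans hmean
  -- notation
  set K := k' + 1 with hKdef
  set A : Finset (Fin K → Fin n) :=
    Finset.univ.filter (fun f : Fin K → Fin n => (Finset.image f Finset.univ).card < K) with hA
  set pf : (Fin K → Fin n) → Fin K → ℕ × ℕ :=
    fun f l => ((f l).1, (f (finRotate K l)).1) with hpf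
  set X : (Fin K → Fin n) → Ω → ℂ := fun f ω => ∏ l, a (pf f l).1 (pf f l).2 ω with hX
  have hrs : rsum a K n = fun ω => ∑ f ∈ A, X f ω := rfl
  -- basic measurability / integrability for products
  have hPmeas : ∀ {m : ℕ} (s : Finset (Fin m)) (p : Fin m → ℕ × ℕ),
      Measurable (fun ω => ∏ l ∈ s, a (p l).1 (p l).2 ω) :=
    fun s p => Finset.measurable_prod _ fun l _ => hmeas _ _
  have hPconjmeas : ∀ {m : ℕ} (s : Finset (Fin m)) (p : Fin m → ℕ × ℕ),
      Measurable (fun ω => ∏ l ∈ s, (starRingEnd ℂ) (a (p l).1 (p l).2 ω)) :=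
    fun s p => Finset.measurable_prod _ fun l _ => continuous_star.measurable.comp (hmeas _ _)
  have hPbound : ∀ {m : ℕ} (s : Finset (Fin m)) (p : Fin m → ℕ × ℕ),
      ∀ᵐ ω ∂P, ‖∏ l ∈ s, a (p l).1 (p l).2 ω‖ ≤ M ^ s.card := by
    intro m s p
    have hall : ∀ᵐ ω ∂P, ∀ l : Fin m, ‖a (p l).1 (p l).2 ω‖ ≤ M :=
      (MeasureTheory.ae_all_iff).2 fun l => habd _ _
    filter_upwards [hall] with ω hω
    rw [norm_prod]
    calc ∏ l ∈ s, ‖a (p l).1 (p l).2 ω‖ ≤ ∏ _l ∈ s, M :=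
        Finset.prod_le_prod (fun _ _ => norm_nonneg _) (fun l _ => hω l)
      _ = M ^ s.card := Finset.prod_const M
  have hPconjbound : ∀ {m : ℕ} (s : Finset (Fin m)) (p : Fin m → ℕ × ℕ),
      ∀ᵐ ω ∂P, ‖∏ l ∈ s, (starRingEnd ℂ) (a (p l).1 (p l).2 ω)‖ ≤ M ^ s.card := by
    intro m s p
    have hall : ∀ᵐ ω ∂P, ∀ l : Fin m, ‖a (p l).1 (p l).2 ω‖ ≤ M :=
      (MeasureTheory.ae_all_iff).2 fun l => habd _ _
    filter_upwards [hall] with ω hω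
    rw [norm_prod]
    calc ∏ l ∈ s, ‖(starRingEnd ℂ) (a (p l).1 (p l).2 ω)‖
        ≤ ∏ _l ∈ s, M := Finset.prod_le_prod (fun _ _ => norm_nonneg _)
          (fun l _ => by rw [RCLike.norm_conj]; exact hω l)
      _ = M ^ s.card := Finset.prod_const M
  have hPint : ∀ {m : ℕ} (s : Finset (Fin m)) (p : Fin m → ℕ × ℕ),
      Integrable (fun ω => ∏ l ∈ s, a (p l).1 (p l).2 ω) P :=
    fun s p => (integrable_const _).mono' (hPmeas s p).aestronglyMeasurable (hPbound s p)
  have hPconjint : ∀ {m : ℕ} (s : Finset (Fin m)) (p : Fin m → ℕ × ℕ),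
      Integrable (fun ω => ∏ l ∈ s, (starRingEnd ℂ) (a (p l).1 (p l).2 ω)) P :=
    fun s p => (integrable_const _).mono' (hPconjmeas s p).aestronglyMeasurable (hPconjbound s p)
  have hcardK : ∀ f : Fin K → Fin n, (Finset.univ : Finset (Fin K)).card = K := by
    intro f; rw [Finset.card_univ, Fintype.card_fin]
  -- facts about X
  have hXmeas : ∀ f, Measurable (X f) := fun f => hPmeas Finset.univ (pf f)
  have hXbd : ∀ f, ∀ᵐ ω ∂P, ‖X f ω‖ ≤ M ^ K := by
    intro f
    have := hPbound Finset.univ (pf f)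
    rwa [hcardK f] at this
  have hMK : (0:ℝ) ≤ M ^ K := pow_nonneg hMnn K
  have hXint : ∀ f, Integrable (X f) P := fun f =>
    (integrable_const (M ^ K)).mono' (hXmeas f).aestronglyMeasurable (hXbd f)
  have hXconjmeas : ∀ g, Measurable (fun ω => (starRingEnd ℂ) (X g ω)) :=
    fun g => continuous_star.measurable.comp (hXmeas g)
  have hXconjbd : ∀ g, ∀ᵐ ω ∂P, ‖(starRingEnd ℂ) (X g ω)‖ ≤ M ^ K := by
    intro g
    filter_upwards [hXbd g] with ω hω
    rwa [RCLike.norm_conj]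
  have hXconjint : ∀ g, Integrable (fun ω => (starRingEnd ℂ) (X g ω)) P := fun g =>
    (integrable_const (M ^ K)).mono' (hXconjmeas g).aestronglyMeasurable (hXconjbd g)
  set μf : (Fin K → Fin n) → ℂ := fun f => ∫ ω, X f ω ∂P with hμf
  have hμbd : ∀ f, ‖μf f‖ ≤ M ^ K := by
    intro f
    calc ‖μf f‖ ≤ ∫ _ω, M ^ K ∂P := norm_integral_le_of_norm_le (integrable_const _) (hXbd f)
      _ = M ^ K := by simp
  have hprodmeas : ∀ f g, Measurable (fun ω => X f ω * (starRingEnd ℂ) (X g ω)) :=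
    fun f g => (hXmeas f).mul (hXconjmeas g)
  have hprodbd : ∀ f g, ∀ᵐ ω ∂P, ‖X f ω * (starRingEnd ℂ) (X g ω)‖ ≤ M ^ K * M ^ K := by
    intro f g
    filter_upwards [hXbd f, hXbd g] with ω h1 h2
    rw [norm_mul, RCLike.norm_conj]
    exact mul_le_mul h1 h2 (norm_nonneg _) hMK
  have hprodint : ∀ f g, Integrable (fun ω => X f ω * (starRingEnd ℂ) (X g ω)) P :=
    fun f g => (integrable_const _).mono' (hprodmeas f g).aestronglyMeasurable (hprodbd f g)
  set T : (Fin K → Fin n) → (Fin K → Fin n) → ℂ :=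
    fun f g => (∫ ω, X f ω * (starRingEnd ℂ) (X g ω) ∂P) - μf f * (starRingEnd ℂ) (μf g) with hT
  have hTbd : ∀ f g, ‖T f g‖ ≤ 2 * (M ^ K * M ^ K) := by
    intro f g
    rw [hT]
    calc ‖(∫ ω, X f ω * (starRingEnd ℂ) (X g ω) ∂P) - μf f * (starRingEnd ℂ) (μf g)‖
        ≤ ‖∫ ω, X f ω * (starRingEnd ℂ) (X g ω) ∂P‖ + ‖μf f * (starRingEnd ℂ) (μf g)‖ :=
          norm_sub_le _ _
      _ ≤ M ^ K * M ^ K + M ^ K * M ^ K := by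
          gcongr
          · calc ‖∫ ω, X f ω * (starRingEnd ℂ) (X g ω) ∂P‖ ≤ ∫ _ω, M ^ K * M ^ K ∂P :=
                norm_integral_le_of_norm_le (integrable_const _) (hprodbd f g)
              _ = M ^ K * M ^ K := by simp
          · rw [norm_mul, RCLike.norm_conj]
            exact mul_le_mul (hμbd f) (hμbd g) (norm_nonneg _) hMK
      _ = 2 * (M ^ K * M ^ K) := by ring
  -- generic integrability of mixed products
  have hVint_gen : ∀ {m1 m2 : ℕ} (s1 : Finset (Fin m1)) (s2 : Finset (Fin m2))
      (p1 : Fin m1 → ℕ × ℕ) (p2 : Fin m2 → ℕ × ℕ),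
      Integrable (fun ω => (∏ l ∈ s1, a (p1 l).1 (p1 l).2 ω) *
        ∏ l ∈ s2, (starRingEnd ℂ) (a (p2 l).1 (p2 l).2 ω)) P := by
    intro m1 m2 s1 s2 p1 p2
    refine (integrable_const (M ^ s1.card * M ^ s2.card)).mono'
      (((hPmeas s1 p1).mul (hPconjmeas s2 p2)).aestronglyMeasurable) ?_
    filter_upwards [hPbound s1 p1, hPconjbound s2 p2] with ω h1 h2
    rw [norm_mul]
    exact mul_le_mul h1 h2 (norm_nonneg _) (by positivity)
  have haVint_gen : ∀ (q' : ℕ × ℕ) {m1 m2 : ℕ} (s1 : Finset (Fin m1)) (s2 : Finset (Fin m2))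
      (p1 : Fin m1 → ℕ × ℕ) (p2 : Fin m2 → ℕ × ℕ),
      Integrable (fun ω => a q'.1 q'.2 ω * ((∏ l ∈ s1, a (p1 l).1 (p1 l).2 ω) *
        ∏ l ∈ s2, (starRingEnd ℂ) (a (p2 l).1 (p2 l).2 ω))) P := by
    intro q' m1 m2 s1 s2 p1 p2
    refine (integrable_const (M * (M ^ s1.card * M ^ s2.card))).mono'
      (((hmeas _ _).mul ((hPmeas s1 p1).mul (hPconjmeas s2 p2))).aestronglyMeasurable) ?_
    filter_upwards [habd q'.1 q'.2, hPbound s1 p1, hPconjbound s2 p2] with ω h0 h1 h2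
    rw [norm_mul, norm_mul]
    have hmm : ‖∏ l ∈ s1, a (p1 l).1 (p1 l).2 ω‖ * ‖∏ l ∈ s2, (starRingEnd ℂ) (a (p2 l).1 (p2 l).2 ω)‖
        ≤ M ^ s1.card * M ^ s2.card := mul_le_mul h1 h2 (norm_nonneg _) (by positivity)
    exact mul_le_mul h0 hmm (by positivity) hMnn
  have hcaVint_gen : ∀ (q' : ℕ × ℕ) {m1 m2 : ℕ} (s1 : Finset (Fin m1)) (s2 : Finset (Fin m2))
      (p1 : Fin m1 → ℕ × ℕ) (p2 : Fin m2 → ℕ × ℕ),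
      Integrable (fun ω => (starRingEnd ℂ) (a q'.1 q'.2 ω) * ((∏ l ∈ s1, a (p1 l).1 (p1 l).2 ω) *
        ∏ l ∈ s2, (starRingEnd ℂ) (a (p2 l).1 (p2 l).2 ω))) P := by
    intro q' m1 m2 s1 s2 p1 p2
    refine (integrable_const (M * (M ^ s1.card * M ^ s2.card))).mono'
      (((continuous_star.measurable.comp (hmeas _ _)).mul
        ((hPmeas s1 p1).mul (hPconjmeas s2 p2))).aestronglyMeasurable) ?_
    filter_upwards [habd q'.1 q'.2, hPbound s1 p1, hPconjbound s2 p2] with ω h0 h1 h2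
    rw [norm_mul, norm_mul, RCLike.norm_conj]
    have hmm : ‖∏ l ∈ s1, a (p1 l).1 (p1 l).2 ω‖ * ‖∏ l ∈ s2, (starRingEnd ℂ) (a (p2 l).1 (p2 l).2 ω)‖
        ≤ M ^ s1.card * M ^ s2.card := mul_le_mul h1 h2 (norm_nonneg _) (by positivity)
    exact mul_le_mul h0 hmm (by positivity) hMnn
  have hconjaint : ∀ (q' : ℕ × ℕ), Integrable (fun ω => (starRingEnd ℂ) (a q'.1 q'.2 ω)) P := by
    intro q'
    refine (integrable_const M).mono'
      ((continuous_star.measurable.comp (hmeas _ _)).aestronglyMeasurable) ?_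
    filter_upwards [habd q'.1 q'.2] with ω h0
    rwa [RCLike.norm_conj]
  have haint : ∀ (q' : ℕ × ℕ), Integrable (a q'.1 q'.2) P := fun q' =>
    (integrable_const M).mono' (hmeas _ _).aestronglyMeasurable (habd q'.1 q'.2)
  -- integral of rsum
  have hrsint : Integrable (rsum a K n) P := by
    rw [hrs]; exact integrable_finset_sum A (fun f _ => hXint f)
  set IR := ∫ ω', rsum a K n ω' ∂P with hIR
  have hIReq : IR = ∑ f ∈ A, μf f := by
    rw [hIR, hrs]
    exact integral_finset_sum A (fun f _ => hXint f)
  have hD : ∀ ω, rsum a K n ω - IR = ∑ f ∈ A, (X f ω - μf f) := by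
    intro ω
    rw [hrs, hIReq, ← Finset.sum_sub_distrib]
  have hYmeas : ∀ f, Measurable (fun ω => X f ω - μf f) := fun f => (hXmeas f).sub measurable_const
  have hYbd : ∀ f, ∀ᵐ ω ∂P, ‖X f ω - μf f‖ ≤ 2 * M ^ K := by
    intro f
    filter_upwards [hXbd f] with ω hω
    calc ‖X f ω - μf f‖ ≤ ‖X f ω‖ + ‖μf f‖ := norm_sub_le _ _
      _ ≤ M ^ K + M ^ K := add_le_add hω (hμbd f)
      _ = 2 * M ^ K := by ring
  have hYint2 : ∀ f g, Integrable (fun ω => (X f ω - μf f) * (starRingEnd ℂ) (X g ω - μf g)) P := by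
    intro f g
    refine (integrable_const ((2 * M ^ K) * (2 * M ^ K))).mono'
      (((hYmeas f).mul (continuous_star.measurable.comp (hYmeas g))).aestronglyMeasurable) ?_
    filter_upwards [hYbd f, hYbd g] with ω h1 h2
    rw [norm_mul, RCLike.norm_conj]
    exact mul_le_mul h1 h2 (norm_nonneg _) (by positivity)
  have hTflat : ∀ f g, ∫ ω, (X f ω - μf f) * (starRingEnd ℂ) (X g ω - μf g) ∂P = T f g := by
    intro f g
    have hptw : ∀ ω, (X f ω - μf f) * (starRingEnd ℂ) (X g ω - μf g)
        = X f ω * (starRingEnd ℂ) (X g ω) - X f ω * (starRingEnd ℂ) (μf g)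
          - μf f * (starRingEnd ℂ) (X g ω) + μf f * (starRingEnd ℂ) (μf g) := by
      intro ω; rw [map_sub]; ring
    have int1 := hprodint f g
    have int2 : Integrable (fun ω => X f ω * (starRingEnd ℂ) (μf g)) P := (hXint f).mul_const _
    have int3 : Integrable (fun ω => μf f * (starRingEnd ℂ) (X g ω)) P := (hXconjint g).const_mul _
    simp only [hptw]
    have intA : Integrable (fun ω => X f ω * (starRingEnd ℂ) (X g ω)
        - X f ω * (starRingEnd ℂ) (μf g)) P := int1.sub int2
    have intB : Integrable (fun ω => X f ω * (starRingEnd ℂ) (X g ω)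
        - X f ω * (starRingEnd ℂ) (μf g) - μf f * (starRingEnd ℂ) (X g ω)) P := intA.sub int3
    rw [integral_add intB (integrable_const _),
        integral_sub intA int3, integral_sub int1 int2,
        integral_mul_const, integral_const_mul, integral_conj, integral_const, probReal_univ]
    simp only [ENNReal.toReal_one, one_smul]
    rw [hT, hμf]
    ring
  have hptw2 : ∀ ω, (rsum a K n ω - IR) * (starRingEnd ℂ) (rsum a K n ω - IR)
      = ∑ f ∈ A, ∑ g ∈ A, (X f ω - μf f) * (starRingEnd ℂ) (X g ω - μf g) := by
    intro ω
    rw [hD ω, map_sum, Finset.sum_mul_sum]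
  have hDDint : Integrable
      (fun ω => (rsum a K n ω - IR) * (starRingEnd ℂ) (rsum a K n ω - IR)) P := by
    rw [show (fun ω => (rsum a K n ω - IR) * (starRingEnd ℂ) (rsum a K n ω - IR))
      = fun ω => ∑ f ∈ A, ∑ g ∈ A, (X f ω - μf f) * (starRingEnd ℂ) (X g ω - μf g) from funext hptw2]
    exact integrable_finset_sum _ fun f _ => integrable_finset_sum _ fun g _ => hYint2 f g
  have hstep2 : ∫ ω, (rsum a K n ω - IR) * (starRingEnd ℂ) (rsum a K n ω - IR) ∂P
      = ∑ f ∈ A, ∑ g ∈ A, T f g := by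
    calc ∫ ω, (rsum a K n ω - IR) * (starRingEnd ℂ) (rsum a K n ω - IR) ∂P
        = ∫ ω, ∑ f ∈ A, ∑ g ∈ A, (X f ω - μf f) * (starRingEnd ℂ) (X g ω - μf g) ∂P :=
          integral_congr_ae (Filter.Eventually.of_forall hptw2)
      _ = ∑ f ∈ A, ∫ ω, ∑ g ∈ A, (X f ω - μf f) * (starRingEnd ℂ) (X g ω - μf g) ∂P :=
          integral_finset_sum A fun f _ => integrable_finset_sum A fun g _ => hYint2 f g
      _ = ∑ f ∈ A, ∑ g ∈ A, T f g := by
          refine Finset.sum_congr rfl fun f _ => ?_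
          rw [integral_finset_sum A fun g _ => hYint2 f g]
          exact Finset.sum_congr rfl fun g _ => hTflat f g
  have hstep1 : ∫ ω, ‖rsum a K n ω - IR‖ ^ 2 ∂P = (∑ f ∈ A, ∑ g ∈ A, T f g).re := by
    rw [← hstep2, ← integral_complex_re _ hDDint]
    apply integral_congr_ae
    refine Filter.Eventually.of_forall fun ω => ?_
    dsimp only
    rw [Complex.mul_conj, Complex.ofReal_re, ← Complex.sq_norm]
  -- vanishing of non-bad terms
  have hTzero : ∀ f g : Fin K → Fin n,
      ¬ ((∃ l l', stp f l = stp g l') ∧ ∀ e : Fin n × Fin n, Ncnt f g e ≠ 1) → T f g = 0 := by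
    intro f g hbad
    have hval : ∀ (h1 h2 : Fin K → Fin n) l l2, pf h1 l = pf h2 l2 → stp h1 l = stp h2 l2 := by
      intro h1 h2 l l2 hEq
      rw [hpf] at hEq
      have e1 : ((h1 l).1 : ℕ) = (h2 l2).1 := congrArg Prod.fst hEq
      have e2 : ((h1 (finRotate K l)).1 : ℕ) = (h2 (finRotate K l2)).1 := congrArg Prod.snd hEq
      unfold stp
      rw [Prod.ext_iff]
      exact ⟨Fin.val_injective e1, Fin.val_injective e2⟩
    rw [not_and_or] at hbad
    rcases hbad with hnosh | hone
    · push_neg at hnosh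
      have hdisj : ∀ l ∈ (Finset.univ : Finset (Fin K)), ∀ l2 ∈ (Finset.univ : Finset (Fin K)),
          pf f l ≠ pf g l2 :=
        fun l _ l2 _ hEq => hnosh l l2 (hval f g l l2 hEq)
      have hIprod := indep_prod_conj_prod hmeas hindep Finset.univ Finset.univ (pf f) (pf g) hdisj
      have hconjXg : (fun ω => ∏ l, (starRingEnd ℂ) (a (pf g l).1 (pf g l).2 ω))
          = fun ω => (starRingEnd ℂ) (X g ω) := by
        funext ω
        rw [hX]
        exact (map_prod (starRingEnd ℂ) _ _).symm
      rw [hconjXg] at hIprod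
      have hIprod' : ProbabilityTheory.IndepFun (X f) (fun ω => (starRingEnd ℂ) (X g ω)) P := by
        have hXf : (fun ω => ∏ l, a (pf f l).1 (pf f l).2 ω) = X f := by rw [hX]
        rwa [hXf] at hIprod
      have hmul := indep_integral_mul hIprod' (hXint f) (hXconjint g) (hprodint f g)
      rw [hT]
      dsimp only
      rw [hmul, integral_conj]
      rw [sub_eq_zero, hμf]
    · push_neg at hone
      obtain ⟨e, he⟩ := hone
      have hcnt : cnt f e + cnt g e = 1 := he
      set q : ℕ × ℕ := ((e.1 : Fin n).1, (e.2 : Fin n).1) with hq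
      have hpfq : ∀ (h1 : Fin K → Fin n) l, pf h1 l = q ↔ stp h1 l = e := by
        intro h1 l
        constructor
        · intro hEq
          rw [hpf] at hEq
          rw [hq] at hEq
          have e1 := congrArg Prod.fst hEq
          have e2 := congrArg Prod.snd hEq
          unfold stp
          rw [Prod.ext_iff]
          exact ⟨Fin.val_injective e1, Fin.val_injective e2⟩
        · intro hEq
          unfold stp at hEq
          rw [Prod.ext_iff] at hEq
          rw [hpf, hq]
          have e1 : ((h1 l).1 : ℕ) = (e.1 : Fin n).1 := congrArg Fin.val hEq.1
          have e2 : ((h1 (finRotate K l)).1 : ℕ) = (e.2 : Fin n).1 := congrArg Fin.val hEq.2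
          rw [Prod.ext_iff]
          exact ⟨e1, e2⟩
      rw [hT]
      dsimp only
      rcases (by omega : (cnt f e = 1 ∧ cnt g e = 0) ∨ (cnt f e = 0 ∧ cnt g e = 1)) with
        ⟨hcf, hcg⟩ | ⟨hcf, hcg⟩
      · -- the unique edge occurrence is in f
        obtain ⟨l0, hl0⟩ := Finset.card_eq_one.1 hcf
        have hl0mem : l0 ∈ Finset.univ.filter (fun l => stp f l = e) := by
          rw [hl0]; exact Finset.mem_singleton_self _
        have hstl0 : stp f l0 = e := (Finset.mem_filter.1 hl0mem).2
        have hql0 : pf f l0 = q := (hpfq f l0).2 hstl0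
        have hothers : ∀ l ∈ Finset.univ.erase l0, pf f l ≠ q := by
          intro l hl hEq
          have hmem : l ∈ Finset.univ.filter (fun l => stp f l = e) :=
            Finset.mem_filter.2 ⟨Finset.mem_univ _, (hpfq f l).1 hEq⟩
          rw [hl0, Finset.mem_singleton] at hmem
          exact Finset.ne_of_mem_erase hl hmem
        have hgnone : ∀ l ∈ (Finset.univ : Finset (Fin K)), pf g l ≠ q := by
          intro l _ hEq
          have hmem : l ∈ Finset.univ.filter (fun l => stp g l = e) :=
            Finset.mem_filter.2 ⟨Finset.mem_univ _, (hpfq g l).1 hEq⟩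
          rw [Finset.card_eq_zero.1 hcg] at hmem
          exact absurd hmem (Finset.notMem_empty _)
        have hsplit : ∀ ω, X f ω
            = a q.1 q.2 ω * ∏ l ∈ Finset.univ.erase l0, a (pf f l).1 (pf f l).2 ω := by
          intro ω
          rw [hX]
          dsimp only
          rw [← Finset.mul_prod_erase Finset.univ
            (fun l => a (pf f l).1 (pf f l).2 ω) (Finset.mem_univ l0), hql0]
        have hi1 := indep_single_prod hmeas hindep q (Finset.univ.erase l0) Finset.univ
          (pf f) (pf g) hothers hgnone
        have hi2 := indep_single_prod hmeas hindep q (Finset.univ.erase l0)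
          (∅ : Finset (Fin K)) (pf f) (pf g) hothers
          (fun l hl => absurd hl (Finset.notMem_empty _))
        have h1 : ∫ ω, X f ω * (starRingEnd ℂ) (X g ω) ∂P = 0 := by
          have hfactor : (fun ω => X f ω * (starRingEnd ℂ) (X g ω))
              = fun ω => a q.1 q.2 ω * ((∏ l ∈ Finset.univ.erase l0, a (pf f l).1 (pf f l).2 ω) *
                ∏ l, (starRingEnd ℂ) (a (pf g l).1 (pf g l).2 ω)) := by
            funext ω
            rw [hsplit ω, hX]
            dsimp only
            rw [map_prod]
            ring
          rw [hfactor, indep_integral_mul hi1 (haint q) (hVint_gen _ _ _ _)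
            (haVint_gen q _ _ _ _), hmean0 q.1 q.2, zero_mul]
        have h2 : μf f = 0 := by
          have hfactor2 : X f = fun ω => a q.1 q.2 ω *
              ((∏ l ∈ Finset.univ.erase l0, a (pf f l).1 (pf f l).2 ω) *
                ∏ l ∈ (∅ : Finset (Fin K)), (starRingEnd ℂ) (a (pf g l).1 (pf g l).2 ω)) := by
            funext ω
            rw [hsplit ω]
            simp
          rw [hμf]
          dsimp only
          rw [hfactor2, indep_integral_mul hi2 (haint q) (hVint_gen _ _ _ _)
            (haVint_gen q _ _ _ _), hmean0 q.1 q.2, zero_mul]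
        rw [h1, h2]
        simp
      · -- the unique edge occurrence is in g
        obtain ⟨l0, hl0⟩ := Finset.card_eq_one.1 hcg
        have hl0mem : l0 ∈ Finset.univ.filter (fun l => stp g l = e) := by
          rw [hl0]; exact Finset.mem_singleton_self _
        have hstl0 : stp g l0 = e := (Finset.mem_filter.1 hl0mem).2
        have hql0 : pf g l0 = q := (hpfq g l0).2 hstl0
        have hothers : ∀ l ∈ Finset.univ.erase l0, pf g l ≠ q := by
          intro l hl hEq
          have hmem : l ∈ Finset.univ.filter (fun l => stp g l = e) :=
            Finset.mem_filter.2 ⟨Finset.mem_univ _, (hpfq g l).1 hEq⟩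
          rw [hl0, Finset.mem_singleton] at hmem
          exact Finset.ne_of_mem_erase hl hmem
        have hfnone : ∀ l ∈ (Finset.univ : Finset (Fin K)), pf f l ≠ q := by
          intro l _ hEq
          have hmem : l ∈ Finset.univ.filter (fun l => stp f l = e) :=
            Finset.mem_filter.2 ⟨Finset.mem_univ _, (hpfq f l).1 hEq⟩
          rw [Finset.card_eq_zero.1 hcf] at hmem
          exact absurd hmem (Finset.notMem_empty _)
        have hsplitg : ∀ ω, (starRingEnd ℂ) (X g ω)
            = (starRingEnd ℂ) (a q.1 q.2 ω) *
              ∏ l ∈ Finset.univ.erase l0, (starRingEnd ℂ) (a (pf g l).1 (pf g l).2 ω) := by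
          intro ω
          rw [hX]
          dsimp only
          rw [map_prod]
          rw [← Finset.mul_prod_erase Finset.univ
            (fun l => (starRingEnd ℂ) (a (pf g l).1 (pf g l).2 ω)) (Finset.mem_univ l0), hql0]
        have hsplitg2 : ∀ ω, X g ω
            = a q.1 q.2 ω * ∏ l ∈ Finset.univ.erase l0, a (pf g l).1 (pf g l).2 ω := by
          intro ω
          rw [hX]
          dsimp only
          rw [← Finset.mul_prod_erase Finset.univ
            (fun l => a (pf g l).1 (pf g l).2 ω) (Finset.mem_univ l0), hql0]
        have hi1 := indep_single_prod hmeas hindep q Finset.univ (Finset.univ.erase l0)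
          (pf f) (pf g) hfnone hothers
        have hi1' : ProbabilityTheory.IndepFun (fun ω => (starRingEnd ℂ) (a q.1 q.2 ω))
            (fun ω => (∏ l, a (pf f l).1 (pf f l).2 ω) *
              ∏ l ∈ Finset.univ.erase l0, (starRingEnd ℂ) (a (pf g l).1 (pf g l).2 ω)) P :=
          hi1.comp continuous_star.measurable measurable_id
        have hi2 := indep_single_prod hmeas hindep q (Finset.univ.erase l0)
          (∅ : Finset (Fin K)) (pf g) (pf g) hothers
          (fun l hl => absurd hl (Finset.notMem_empty _))
        have hconjmean : ∫ ω, (starRingEnd ℂ) (a q.1 q.2 ω) ∂P = 0 := by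
          rw [integral_conj, hmean0 q.1 q.2, map_zero]
        have h1 : ∫ ω, X f ω * (starRingEnd ℂ) (X g ω) ∂P = 0 := by
          have hfactor : (fun ω => X f ω * (starRingEnd ℂ) (X g ω))
              = fun ω => (starRingEnd ℂ) (a q.1 q.2 ω) *
                ((∏ l, a (pf f l).1 (pf f l).2 ω) *
                  ∏ l ∈ Finset.univ.erase l0, (starRingEnd ℂ) (a (pf g l).1 (pf g l).2 ω)) := by
            funext ω
            rw [hsplitg ω, hX]
            dsimp only
            ring
          rw [hfactor, indep_integral_mul hi1' (hconjaint q) (hVint_gen _ _ _ _)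
            (hcaVint_gen q _ _ _ _), hconjmean, zero_mul]
        have h2 : μf g = 0 := by
          have hfactor2 : X g = fun ω => a q.1 q.2 ω *
              ((∏ l ∈ Finset.univ.erase l0, a (pf g l).1 (pf g l).2 ω) *
                ∏ l ∈ (∅ : Finset (Fin K)), (starRingEnd ℂ) (a (pf g l).1 (pf g l).2 ω)) := by
            funext ω
            rw [hsplitg2 ω]
            simp
          rw [hμf]
          dsimp only
          rw [hfactor2, indep_integral_mul hi2 (haint q) (hVint_gen _ _ _ _)
            (haVint_gen q _ _ _ _), hmean0 q.1 q.2, zero_mul]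
        rw [h1, h2]
        simp
  -- counting bad pairs
  set BadP : Finset ((Fin K → Fin n) × (Fin K → Fin n)) :=
    (A ×ˢ A).filter (fun fg => (∃ l l', stp fg.1 l = stp fg.2 l') ∧
      ∀ e : Fin n × Fin n, Ncnt fg.1 fg.2 e ≠ 1) with hBadP
  have hsum_eq : ∑ f ∈ A, ∑ g ∈ A, T f g = ∑ fg ∈ BadP, T fg.1 fg.2 := by
    rw [← Finset.sum_product']
    exact (Finset.sum_filter_of_ne (fun fg _ hne => by
      by_contra hnb
      exact hne (hTzero fg.1 fg.2 hnb))).symm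
  have hBadcard : BadP.card ≤ k' ^ (2 * K) * n ^ k' := by
    refine le_trans (Finset.card_le_card ?_) (count_small hn)
    intro fg hfg
    have h := Finset.mem_filter.1 hfg
    rw [Finset.mem_filter]
    refine ⟨Finset.mem_univ _, ?_⟩
    have hf1 := (Finset.mem_product.1 h.1).1
    have hg1 := (Finset.mem_product.1 h.1).2
    have hdf := (Finset.mem_filter.1 hf1).2
    have hdg := (Finset.mem_filter.1 hg1).2
    exact main_comb fg.1 fg.2 hdf hdg h.2.1 h.2.2
  rw [hstep1]
  calc (∑ f ∈ A, ∑ g ∈ A, T f g).re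
      ≤ ‖∑ fg ∈ BadP, T fg.1 fg.2‖ := by
        rw [hsum_eq]
        exact Complex.re_le_norm _
    _ ≤ ∑ fg ∈ BadP, ‖T fg.1 fg.2‖ := norm_sum_le _ _
    _ ≤ BadP.card • (2 * (M ^ K * M ^ K)) :=
        Finset.sum_le_card_nsmul _ _ _ (fun fg _ => hTbd _ _)
    _ = (BadP.card : ℝ) * (2 * (M ^ K * M ^ K)) := nsmul_eq_mul _ _
    _ ≤ ((k' ^ (2 * K) * n ^ k' : ℕ) : ℝ) * (2 * (M ^ K * M ^ K)) := by
        have hcast : (BadP.card : ℝ) ≤ ((k' ^ (2 * K) * n ^ k' : ℕ) : ℝ) := Nat.cast_le.2 hBadcard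
        exact mul_le_mul_of_nonneg_right hcast (by positivity)

end VarBound

end RsumAux


/-- **Variance bound for the degenerate part** (proof of Lemma 3.5): for every `k ≥ 1` there
is a constant `C_k`, depending only on `k`, such that for i.i.d. entries with mean `0`,
variance `1` and `|a₁₁| ≤ M` a.s., `Var(r_k^{(n)}) ≤ 4 C_k M^{2k} n^{k-1}` for all `n ≥ 1`;
in particular `Var(r_k^{(n)}/n^{k/2}) → 0` as `n → ∞`. -/
theorem rsum_variance_bound (k : ℕ) (hk : 1 ≤ k) :
    ∃ C : ℝ, ∀ (Ω : Type*) [MeasurableSpace Ω] (P : Measure Ω) [IsProbabilityMeasure P]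
      (a : ℕ → ℕ → Ω → ℂ),
      (∀ i j, Measurable (a i j)) →
      iIndepFun (fun p : ℕ × ℕ => a p.1 p.2) P →
      (∀ i j, IdentDistrib (a i j) (a 0 0) P P) →
      (∫ ω, a 0 0 ω ∂P = 0) →
      (∫ ω, ‖a 0 0 ω‖ ^ 2 ∂P = 1) →
      ∀ M : ℝ, 0 < M → (∀ᵐ ω ∂P, ‖a 0 0 ω‖ ≤ M) →
      (∀ n : ℕ, 1 ≤ n →
        ∫ ω, ‖rsum a k n ω - ∫ ω', rsum a k n ω' ∂P‖ ^ 2 ∂P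
          ≤ 4 * C * M ^ (2 * k) * (n : ℝ) ^ (k - 1)) ∧
      Tendsto
        (fun n : ℕ =>
          ∫ ω, ‖rsum a k n ω / ((Real.sqrt n : ℂ) ^ k)
            - ∫ ω', rsum a k n ω' / ((Real.sqrt n : ℂ) ^ k) ∂P‖ ^ 2 ∂P)
        atTop (nhds 0) := by
  obtain ⟨k', rfl⟩ : ∃ k', k = k' + 1 := ⟨k - 1, (Nat.succ_pred_eq_of_pos hk).symm⟩
  refine ⟨((k' ^ (2 * (k' + 1)) : ℕ) : ℝ), ?_⟩
  intro Ω _ P _ a hmeas hindep hident hmean hvar M hM hbound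
  have hMnn : 0 ≤ M := hM.le
  have key : ∀ n : ℕ, 1 ≤ n →
      ∫ ω, ‖rsum a (k'+1) n ω - ∫ ω', rsum a (k'+1) n ω' ∂P‖ ^ 2 ∂P
        ≤ 4 * ((k' ^ (2 * (k' + 1)) : ℕ) : ℝ) * M ^ (2 * (k'+1)) * (n : ℝ) ^ k' := by
    intro n hn
    have h := RsumAux.var_bound hmeas hindep hident hmean hM hbound k' n hn
    refine h.trans ?_
    have hM2 : M ^ (k'+1) * M ^ (k'+1) = M ^ (2 * (k'+1)) := by
      rw [← pow_add]
      congr 1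
      ring
    rw [hM2]
    push_cast
    have hx : (0:ℝ) ≤ ((k':ℝ) ^ (2*(k'+1)) * (n:ℝ) ^ k') * M ^ (2*(k'+1)) := by positivity
    nlinarith [hx]
  constructor
  · intro n hn
    exact key n hn
  · have hnonneg : ∀ n : ℕ, 0 ≤ ∫ ω, ‖rsum a (k'+1) n ω / ((Real.sqrt n : ℂ) ^ (k'+1))
        - ∫ ω', rsum a (k'+1) n ω' / ((Real.sqrt n : ℂ) ^ (k'+1)) ∂P‖ ^ 2 ∂P :=
      fun n => integral_nonneg fun ω => by positivity
    refine squeeze_zero' (Filter.Eventually.of_forall hnonneg) ?_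
      (tendsto_const_div_atTop_nhds_zero_nat
        (4 * ((k' ^ (2 * (k' + 1)) : ℕ) : ℝ) * M ^ (2 * (k'+1))))
    refine Filter.eventually_atTop.2 ⟨1, fun n hn => ?_⟩
    have hnpos : (0:ℝ) < (n:ℝ) := by exact_mod_cast hn
    set c : ℂ := ((Real.sqrt n : ℂ) ^ (k'+1)) with hc
    have hIdiv : ∫ ω', rsum a (k'+1) n ω' / c ∂P
        = (∫ ω', rsum a (k'+1) n ω' ∂P) / c := integral_div c _
    have hnormc : ‖c‖ ^ 2 = (n:ℝ) ^ (k'+1) := by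
      rw [hc, norm_pow, Complex.norm_real, Real.norm_eq_abs,
        abs_of_nonneg (Real.sqrt_nonneg _)]
      rw [← pow_mul, mul_comm (k'+1) 2, pow_mul,
        Real.sq_sqrt (by positivity : (0:ℝ) ≤ (n:ℝ))]
    have hptw : ∀ ω, ‖rsum a (k'+1) n ω / c - ∫ ω', rsum a (k'+1) n ω' / c ∂P‖ ^ 2
        = ‖rsum a (k'+1) n ω - ∫ ω', rsum a (k'+1) n ω' ∂P‖ ^ 2 / (n:ℝ) ^ (k'+1) := by
      intro ω
      rw [hIdiv, div_sub_div_same, norm_div, div_pow, hnormc]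
    calc ∫ ω, ‖rsum a (k'+1) n ω / c - ∫ ω', rsum a (k'+1) n ω' / c ∂P‖ ^ 2 ∂P
        = ∫ ω, ‖rsum a (k'+1) n ω - ∫ ω', rsum a (k'+1) n ω' ∂P‖ ^ 2 / (n:ℝ) ^ (k'+1) ∂P :=
          integral_congr_ae (Filter.Eventually.of_forall hptw)
      _ = (∫ ω, ‖rsum a (k'+1) n ω - ∫ ω', rsum a (k'+1) n ω' ∂P‖ ^ 2 ∂P) / (n:ℝ) ^ (k'+1) :=
          integral_div _ _
      _ ≤ (4 * ((k' ^ (2 * (k' + 1)) : ℕ) : ℝ) * M ^ (2 * (k'+1)) * (n : ℝ) ^ k') / (n:ℝ) ^ (k'+1) := by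
          exact (div_le_div_iff_of_pos_right (by positivity : (0:ℝ) < (n:ℝ) ^ (k'+1))).2 (key n hn)
      _ = (4 * ((k' ^ (2 * (k' + 1)) : ℕ) : ℝ) * M ^ (2 * (k'+1))) / (n:ℝ) := by
          rw [pow_succ, mul_comm ((n:ℝ) ^ k') (n:ℝ)]
          rw [mul_div_mul_right _ _ (by positivity : ((n:ℝ) ^ k') ≠ 0)]

end
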